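/- arXiv:2007.14256 — 3 statements merged into one kernel-verified Lean document; each statement's English description precedes it below -/
import Mathlib

section
/- Consider the dynamical system on ℝᵐ given by (G(x,ẋ) + Ξ_G(x,ẋ)) ẍ + ξ_G(x,ẋ) = −∇Φ(x) − B(x,ẋ)ẋ, where Ξ_G(x,ẋ) = ½ Σᵢ ẋᵢ ∂_ẋ gᵢ(x,ẋ) and ξ_G(x,ẋ) = Ġˣ(x,ẋ)ẋ − ½∇ₓ(ẋᵀG(x,ẋ)ẋ). Define V(x,ẋ) = ½ ẋᵀ G(x,ẋ) ẋ + Φ(x). Then along any C² solution trajectory, d/dt V(x(t), ẋ(t)) = −ẋᵀ B(x,ẋ) ẋ. -/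
open Matrix BigOperators

/-- Partial derivative of a scalar function on `ℝᵐ` in the `k`-th coordinate direction. -/
noncomputable def pder {m : ℕ} (f : (Fin m → ℝ) → ℝ) (x : Fin m → ℝ) (k : Fin m) : ℝ :=
  fderiv ℝ f x (Pi.single k 1)

/-- The curvature correction matrix Ξ_G(x,ẋ) = ½ Σᵢ ẋᵢ ∂_ẋ gᵢ(x,ẋ), where gᵢ is the
`i`-th column of `G` and the derivative is in the velocity variable. -/
noncomputable def XiG {m : ℕ} (G : (Fin m → ℝ) → (Fin m → ℝ) → Matrix (Fin m) (Fin m) ℝ)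
    (x v : Fin m → ℝ) : Matrix (Fin m) (Fin m) ℝ :=
  Matrix.of fun j k => (1 / 2) * ∑ i, v i * pder (fun w => G x w j i) v k

/-- The curvature vector ξ_G(x,ẋ) = Ġˣ(x,ẋ)ẋ − ½∇ₓ(ẋᵀG(x,ẋ)ẋ). -/
noncomputable def xiG {m : ℕ} (G : (Fin m → ℝ) → (Fin m → ℝ) → Matrix (Fin m) (Fin m) ℝ)
    (x v : Fin m → ℝ) : Fin m → ℝ := fun i =>
  (∑ j, (∑ k, v k * pder (fun y => G y v i j) x k) * v j)
    - (1 / 2) * pder (fun y => v ⬝ᵥ (G y v).mulVec v) x i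

lemma clm_apply_sum {m : ℕ} (f' : (Fin m → ℝ) →L[ℝ] ℝ) (v : Fin m → ℝ) :
    f' v = ∑ k, v k * f' (Pi.single k 1) := by
  conv_lhs => rw [← Finset.univ_sum_single v]
  rw [map_sum]
  refine Finset.sum_congr rfl fun k _ => ?_
  have h : (v k) • (Pi.single k 1 : Fin m → ℝ) = Pi.single k (v k) := by
    rw [← Pi.single_smul, smul_eq_mul, mul_one]
  rw [← h, ContinuousLinearMap.map_smul, smul_eq_mul]

lemma fderiv_prod_apply' {m : ℕ} (f : (Fin m → ℝ) × (Fin m → ℝ) → ℝ) (hf : Differentiable ℝ f)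
    (x v u w : Fin m → ℝ) :
    fderiv ℝ f (x, v) (u, w)
      = (∑ k, u k * pder (fun y => f (y, v)) x k) + ∑ k, w k * pder (fun z => f (x, z)) v k := by
  set Df := fderiv ℝ f (x, v) with hDf
  have hd : HasFDerivAt f Df (x, v) := (hf _).hasFDerivAt
  have h1 : HasFDerivAt (fun y => f (y, v)) (Df.comp (ContinuousLinearMap.inl ℝ _ _)) x :=
    hd.comp x (hasFDerivAt_prodMk_left x v)
  have h2 : HasFDerivAt (fun z => f (x, z)) (Df.comp (ContinuousLinearMap.inr ℝ _ _)) v :=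
    hd.comp v (hasFDerivAt_prodMk_right x v)
  have e1 : ∀ k, pder (fun y => f (y, v)) x k
      = (Df.comp (ContinuousLinearMap.inl ℝ _ _)) (Pi.single k 1) := by
    intro k; rw [pder, h1.fderiv]
  have e2 : ∀ k, pder (fun z => f (x, z)) v k
      = (Df.comp (ContinuousLinearMap.inr ℝ _ _)) (Pi.single k 1) := by
    intro k; rw [pder, h2.fderiv]
  have hsplit : ((u, w) : (Fin m → ℝ) × (Fin m → ℝ)) = (u, 0) + (0, w) := by simp
  calc Df (u, w) = Df (u, 0) + Df (0, w) := by rw [← map_add, ← hsplit]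
    _ = (Df.comp (ContinuousLinearMap.inl ℝ _ _)) u
        + (Df.comp (ContinuousLinearMap.inr ℝ _ _)) w := rfl
    _ = _ := by
        rw [clm_apply_sum (Df.comp (ContinuousLinearMap.inl ℝ _ _)) u,
          clm_apply_sum (Df.comp (ContinuousLinearMap.inr ℝ _ _)) w]
        congr 1
        · exact Finset.sum_congr rfl fun k _ => by rw [e1]
        · exact Finset.sum_congr rfl fun k _ => by rw [e2]

theorem stmt7 {m : ℕ}
    (G : (Fin m → ℝ) → (Fin m → ℝ) → Matrix (Fin m) (Fin m) ℝ)
    (hG : ∀ i j, ContDiff ℝ 1 (fun p : (Fin m → ℝ) × (Fin m → ℝ) => G p.1 p.2 i j))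
    (hGsym : ∀ x v, (G x v).IsSymm)
    (B : (Fin m → ℝ) → (Fin m → ℝ) → Matrix (Fin m) (Fin m) ℝ)
    (hB : ∀ x v, (B x v).PosSemidef)
    (Φ : (Fin m → ℝ) → ℝ) (hΦ : ContDiff ℝ 1 Φ) (hΦlb : ∃ cΦ, ∀ y, cΦ ≤ Φ y)
    (x : ℝ → Fin m → ℝ) (hx : ContDiff ℝ 2 x)
    -- the GDS equation of motion along the trajectory:
    (heq : ∀ t,
      (G (x t) (deriv x t) + XiG G (x t) (deriv x t)).mulVec (deriv (deriv x) t)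
        + xiG G (x t) (deriv x t)
      = (fun i => -(pder Φ (x t) i)) - (B (x t) (deriv x t)).mulVec (deriv x t)) :
    ∀ t, HasDerivAt
      (fun s => (1 / 2) * (deriv x s ⬝ᵥ (G (x s) (deriv x s)).mulVec (deriv x s)) + Φ (x s))
      (-(deriv x t ⬝ᵥ (B (x t) (deriv x t)).mulVec (deriv x t))) t := by
  intro t
  -- smoothness of the trajectory
  have hx2 : ContDiff ℝ ((1 : WithTop ℕ∞) + 1) x := by
    have : ((1 : WithTop ℕ∞) + 1) = 2 := by norm_num
    rw [this]; exact hx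
  obtain ⟨hxd, -, hdx1⟩ := contDiff_succ_iff_deriv.mp hx2
  have hdxd : Differentiable ℝ (deriv x) := hdx1.differentiable one_ne_zero
  have hx' : HasDerivAt x (deriv x t) t := (hxd t).hasDerivAt
  have hv' : HasDerivAt (deriv x) (deriv (deriv x) t) t := (hdxd t).hasDerivAt
  have hc : HasDerivAt (fun s => (x s, deriv x s)) (deriv x t, deriv (deriv x) t) t :=
    hx'.prodMk hv'
  set vt : Fin m → ℝ := deriv x t with hvtdef
  set at' : Fin m → ℝ := deriv (deriv x) t with hatdef
  have hGdiff : ∀ i j, Differentiable ℝ (fun p : (Fin m → ℝ) × (Fin m → ℝ) => G p.1 p.2 i j) :=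
    fun i j => (hG i j).differentiable one_ne_zero
  set g' : Fin m → Fin m → ℝ :=
    fun i j => fderiv ℝ (fun p : (Fin m → ℝ) × (Fin m → ℝ) => G p.1 p.2 i j) (x t, vt) (vt, at')
    with hg'def
  have hGc : ∀ i j, HasDerivAt (fun s => G (x s) (deriv x s) i j) (g' i j) t := fun i j =>
    ((hGdiff i j) _).hasFDerivAt.comp_hasDerivAt t hc
  have hΦc : HasDerivAt (fun s => Φ (x s)) (fderiv ℝ Φ (x t) vt) t :=
    ((hΦ.differentiable one_ne_zero) _).hasFDerivAt.comp_hasDerivAt t hx'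
  have hvi : ∀ i, HasDerivAt (fun s => deriv x s i) (at' i) t := fun i => hasDerivAt_pi.mp hv' i
  -- derivative of the kinetic (quadratic) term
  have hq : HasDerivAt (fun s => deriv x s ⬝ᵥ (G (x s) (deriv x s)).mulVec (deriv x s))
      (∑ i, (at' i * (∑ j, G (x t) vt i j * vt j)
        + vt i * (∑ j, (g' i j * vt j + G (x t) vt i j * at' j)))) t := by
    have hfe : (fun s => deriv x s ⬝ᵥ (G (x s) (deriv x s)).mulVec (deriv x s))
        = fun s => ∑ i, (deriv x s i) * (∑ j, G (x s) (deriv x s) i j * deriv x s j) := by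
      funext s; simp [dotProduct, Matrix.mulVec]
    rw [hfe]
    exact HasDerivAt.fun_sum fun i _ =>
      (hvi i).fun_mul (HasDerivAt.fun_sum fun j _ => (hGc i j).fun_mul (hvi j))
  have hV : HasDerivAt
      (fun s => (1 / 2) * (deriv x s ⬝ᵥ (G (x s) (deriv x s)).mulVec (deriv x s)) + Φ (x s))
      ((1 / 2) * (∑ i, (at' i * (∑ j, G (x t) vt i j * vt j)
        + vt i * (∑ j, (g' i j * vt j + G (x t) vt i j * at' j))))
        + fderiv ℝ Φ (x t) vt) t := (hq.const_mul (1 / 2)).add hΦc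
  -- now identify the derivative value
  have hval : (1 / 2) * (∑ i, (at' i * (∑ j, G (x t) vt i j * vt j)
        + vt i * (∑ j, (g' i j * vt j + G (x t) vt i j * at' j))))
        + fderiv ℝ Φ (x t) vt
      = -(vt ⬝ᵥ (B (x t) vt).mulVec vt) := by
    -- abbreviations for partial derivatives
    set q : Fin m → Fin m → Fin m → ℝ :=
      fun i j k => pder (fun y => G y vt i j) (x t) k with hqdef
    set p : Fin m → Fin m → Fin m → ℝ :=
      fun i j k => pder (fun w => G (x t) w i j) vt k with hpdef
    -- fact 1 : decomposition of g'
    have fact1 : ∀ i j, g' i j = (∑ k, vt k * q i j k) + ∑ k, at' k * p i j k := by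
      intro i j
      exact fderiv_prod_apply' _ (hGdiff i j) (x t) vt vt at'
    -- fact 2 : directional derivative of Φ
    have fact2 : fderiv ℝ Φ (x t) vt = ∑ k, vt k * pder Φ (x t) k :=
      clm_apply_sum (fderiv ℝ Φ (x t)) vt
    -- differentiability of x-partial maps
    have hGx : ∀ i j, Differentiable ℝ (fun y => G y vt i j) := fun i j =>
      (hGdiff i j).comp (differentiable_id.prodMk (differentiable_const _))
    -- fact 3 : pder of the quadratic form in x
    have fact3 : ∀ k, pder (fun y => vt ⬝ᵥ (G y vt).mulVec vt) (x t) k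
        = ∑ i, ∑ j, (vt i * vt j) * q i j k := by
      intro k
      have hbig : HasFDerivAt (fun y => vt ⬝ᵥ (G y vt).mulVec vt)
          (∑ i, ∑ j, (vt i * vt j) • fderiv ℝ (fun y => G y vt i j) (x t)) (x t) := by
        have hfe : (fun y => vt ⬝ᵥ (G y vt).mulVec vt)
            = fun y => ∑ i, ∑ j, (vt i * vt j) * G y vt i j := by
          funext y
          simp only [dotProduct, Matrix.mulVec, Finset.mul_sum]
          exact Finset.sum_congr rfl fun i _ => Finset.sum_congr rfl fun j _ => by ring
        rw [hfe]
        exact HasFDerivAt.fun_sum fun i _ => HasFDerivAt.fun_sum fun j _ =>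
          ((hGx i j _).hasFDerivAt).const_mul (vt i * vt j)
      rw [pder, hbig.fderiv]
      simp [hqdef, pder, smul_eq_mul]
    -- componentwise equation of motion
    have heqi : ∀ i, (∑ j, (G (x t) vt i j + XiG G (x t) vt i j) * at' j) + xiG G (x t) vt i
        = -(pder Φ (x t) i) - ∑ j, B (x t) vt i j * vt j := by
      intro i
      have h := congrFun (heq t) i
      simpa [Matrix.mulVec, dotProduct] using h
    -- step L1 : symmetry of G
    have L1 : ∑ i, at' i * (∑ j, G (x t) vt i j * vt j)
        = ∑ i, vt i * (∑ j, G (x t) vt i j * at' j) := by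
      calc ∑ i, at' i * (∑ j, G (x t) vt i j * vt j)
          = ∑ i, ∑ j, at' i * (G (x t) vt i j * vt j) :=
            Finset.sum_congr rfl fun i _ => Finset.mul_sum _ _ _
        _ = ∑ j, ∑ i, at' i * (G (x t) vt i j * vt j) := Finset.sum_comm
        _ = ∑ j, vt j * (∑ i, G (x t) vt j i * at' i) := by
            refine Finset.sum_congr rfl fun j _ => ?_
            rw [Finset.mul_sum]
            refine Finset.sum_congr rfl fun i _ => ?_
            rw [(hGsym (x t) vt).apply j i]; ring
        _ = ∑ i, vt i * (∑ j, G (x t) vt i j * at' j) := rfl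
    -- step L2 : the velocity-derivative part matches XiG
    have L2 : ∑ i, vt i * (∑ j, (∑ k, at' k * p i j k) * vt j)
        = 2 * ∑ i, vt i * (∑ j, XiG G (x t) vt i j * at' j) := by
      have lhs_eq : ∀ i, ∑ j, (∑ k, at' k * p i j k) * vt j
          = ∑ k, ∑ j, at' k * p i j k * vt j := by
        intro i
        rw [Finset.sum_comm]
        exact Finset.sum_congr rfl fun j _ => by rw [Finset.sum_mul]
      have rhs_eq : ∀ i, ∑ j, XiG G (x t) vt i j * at' j
          = (1/2) * ∑ k, ∑ j, at' k * p i j k * vt j := by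
        intro i
        rw [Finset.mul_sum]
        refine Finset.sum_congr rfl fun k _ => ?_
        show ((1 : ℝ) / 2 * ∑ l, vt l * p i l k) * at' k = _
        rw [Finset.mul_sum, Finset.sum_mul, Finset.mul_sum]
        exact Finset.sum_congr rfl fun j _ => by ring
      rw [Finset.mul_sum]
      exact Finset.sum_congr rfl fun i _ => by rw [lhs_eq i, rhs_eq i]; ring
    -- step L3 : the position-derivative part matches xiG
    have L3 : (1/2) * ∑ i, vt i * (∑ j, (∑ k, vt k * q i j k) * vt j)
        = ∑ i, vt i * xiG G (x t) vt i := by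
      have hx3 : ∀ i, xiG G (x t) vt i
          = (∑ j, (∑ k, vt k * q i j k) * vt j)
            - (1/2) * ∑ a, ∑ b, (vt a * vt b) * q a b i := by
        intro i
        show (∑ j, (∑ k, vt k * q i j k) * vt j)
            - (1 / 2) * pder (fun y => vt ⬝ᵥ (G y vt).mulVec vt) (x t) i = _
        rw [fact3 i]
      -- triple-sum commutation:
      have comm3 : ∑ i, vt i * ((1/2) * ∑ a, ∑ b, (vt a * vt b) * q a b i)
          = (1/2) * ∑ i, vt i * (∑ j, (∑ k, vt k * q i j k) * vt j) := by
        have flat1 : ∑ i, vt i * ((1/2) * ∑ a, ∑ b, (vt a * vt b) * q a b i)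
            = (1/2) * ∑ i, ∑ a, ∑ b, vt i * ((vt a * vt b) * q a b i) := by
          rw [Finset.mul_sum]
          refine Finset.sum_congr rfl fun i _ => ?_
          simp only [Finset.mul_sum]
          exact Finset.sum_congr rfl fun a _ =>
            Finset.sum_congr rfl fun b _ => by ring
        have flat2 : ∑ i, vt i * (∑ j, (∑ k, vt k * q i j k) * vt j)
            = ∑ i, ∑ j, ∑ k, vt k * (vt i * vt j * q i j k) := by
          refine Finset.sum_congr rfl fun i _ => ?_
          simp only [Finset.mul_sum, Finset.sum_mul]
          exact Finset.sum_congr rfl fun j _ =>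
            Finset.sum_congr rfl fun k _ => by ring
        have swap : ∑ i, ∑ a, ∑ b, vt i * ((vt a * vt b) * q a b i)
            = ∑ a, ∑ b, ∑ i, vt i * ((vt a * vt b) * q a b i) := by
          rw [Finset.sum_comm]
          exact Finset.sum_congr rfl fun a _ => Finset.sum_comm
        rw [flat1, flat2, swap]
      calc (1/2) * ∑ i, vt i * (∑ j, (∑ k, vt k * q i j k) * vt j)
          = ∑ i, vt i * (∑ j, (∑ k, vt k * q i j k) * vt j)
            - (1/2) * ∑ i, vt i * (∑ j, (∑ k, vt k * q i j k) * vt j) := by ring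
        _ = ∑ i, vt i * (∑ j, (∑ k, vt k * q i j k) * vt j)
            - ∑ i, vt i * ((1/2) * ∑ a, ∑ b, (vt a * vt b) * q a b i) := by rw [comm3]
        _ = ∑ i, vt i * xiG G (x t) vt i := by
            rw [← Finset.sum_sub_distrib]
            exact Finset.sum_congr rfl fun i _ => by rw [hx3 i]; ring
    -- assemble
    simp only [fact1]
    have expand : ∑ i, (at' i * (∑ j, G (x t) vt i j * vt j)
        + vt i * (∑ j, (((∑ k, vt k * q i j k) + ∑ k, at' k * p i j k) * vt j
          + G (x t) vt i j * at' j)))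
        = (∑ i, at' i * (∑ j, G (x t) vt i j * vt j))
          + (∑ i, vt i * (∑ j, (∑ k, vt k * q i j k) * vt j))
          + (∑ i, vt i * (∑ j, (∑ k, at' k * p i j k) * vt j))
          + (∑ i, vt i * (∑ j, G (x t) vt i j * at' j)) := by
      rw [← Finset.sum_add_distrib, ← Finset.sum_add_distrib, ← Finset.sum_add_distrib]
      refine Finset.sum_congr rfl fun i _ => ?_
      have : ∑ j, (((∑ k, vt k * q i j k) + ∑ k, at' k * p i j k) * vt j
          + G (x t) vt i j * at' j)
          = (∑ j, (∑ k, vt k * q i j k) * vt j) + (∑ j, (∑ k, at' k * p i j k) * vt j)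
            + ∑ j, G (x t) vt i j * at' j := by
        rw [← Finset.sum_add_distrib, ← Finset.sum_add_distrib]
        exact Finset.sum_congr rfl fun j _ => by ring
      rw [this]; ring
    have hsum : ∀ i, vt i * ((∑ j, (G (x t) vt i j + XiG G (x t) vt i j) * at' j)
          + xiG G (x t) vt i)
        = vt i * (-(pder Φ (x t) i) - ∑ j, B (x t) vt i j * vt j) := fun i => by rw [heqi i]
    have key : (∑ i, vt i * (∑ j, G (x t) vt i j * at' j))
        + (∑ i, vt i * (∑ j, XiG G (x t) vt i j * at' j))
        + (∑ i, vt i * xiG G (x t) vt i)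
        = -(∑ k, vt k * pder Φ (x t) k) - ∑ i, vt i * (∑ j, B (x t) vt i j * vt j) := by
      have e1 : ∀ i, vt i * (∑ j, G (x t) vt i j * at' j)
            + vt i * (∑ j, XiG G (x t) vt i j * at' j)
            + vt i * xiG G (x t) vt i
          = -(vt i * pder Φ (x t) i) - vt i * (∑ j, B (x t) vt i j * vt j) := by
        intro i
        have h2 : ∑ j, (G (x t) vt i j + XiG G (x t) vt i j) * at' j
            = (∑ j, G (x t) vt i j * at' j) + ∑ j, XiG G (x t) vt i j * at' j := by
          rw [← Finset.sum_add_distrib]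
          exact Finset.sum_congr rfl fun j _ => by ring
        have h3 := hsum i
        rw [h2] at h3
        nlinarith [h3]
      calc (∑ i, vt i * (∑ j, G (x t) vt i j * at' j))
            + (∑ i, vt i * (∑ j, XiG G (x t) vt i j * at' j))
            + (∑ i, vt i * xiG G (x t) vt i)
          = ∑ i, (vt i * (∑ j, G (x t) vt i j * at' j)
              + vt i * (∑ j, XiG G (x t) vt i j * at' j)
              + vt i * xiG G (x t) vt i) := by
            rw [← Finset.sum_add_distrib, ← Finset.sum_add_distrib]
        _ = ∑ i, (-(vt i * pder Φ (x t) i) - vt i * (∑ j, B (x t) vt i j * vt j)) :=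
            Finset.sum_congr rfl fun i _ => e1 i
        _ = -(∑ k, vt k * pder Φ (x t) k) - ∑ i, vt i * (∑ j, B (x t) vt i j * vt j) := by
            rw [Finset.sum_sub_distrib, Finset.sum_neg_distrib]
    have hBv : vt ⬝ᵥ (B (x t) vt).mulVec vt = ∑ i, vt i * (∑ j, B (x t) vt i j * vt j) := by
      simp [dotProduct, Matrix.mulVec]
    rw [expand, fact2, hBv, L1]
    linarith [L2, L3, key]
  rw [← hval]
  exact hV
end

section
/- For a GDS with no potential and no damping, i.e. (G(x,ẋ) + Ξ_G(x,ẋ)) ẍ + ξ_G(x,ẋ) = 0, the generalized kinetic energy K(x,ẋ) = ½ ẋᵀ G(x,ẋ) ẋ is conserved along any C² solution: d/dt K(x(t),ẋ(t)) = 0. -/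
open Matrix BigOperators

-- cyclic permutation of a triple sum
lemma cycle3 {m : ℕ} (f : Fin m → Fin m → Fin m → ℝ) :
    ∑ i, ∑ j, ∑ k, f i j k = ∑ i, ∑ j, ∑ k, f k i j := by
  rw [Finset.sum_comm]
  exact Finset.sum_congr rfl fun a _ => Finset.sum_comm

lemma pair_decomp {m : ℕ} (u1 u2 : Fin m → ℝ) :
    ((u1, u2) : (Fin m → ℝ) × (Fin m → ℝ))
      = (∑ k, u1 k • (((Pi.single k 1 : Fin m → ℝ), (0 : Fin m → ℝ)) : (Fin m → ℝ) × (Fin m → ℝ)))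
        + ∑ k, u2 k • (((0 : Fin m → ℝ), (Pi.single k 1 : Fin m → ℝ)) : (Fin m → ℝ) × (Fin m → ℝ)) := by
  have h1 : ∀ u : Fin m → ℝ, u = ∑ k, u k • (Pi.single k 1 : Fin m → ℝ) := by
    intro u; funext j
    simp [Finset.sum_apply, Pi.single_apply]
  rw [Prod.ext_iff]
  constructor
  · simp only [Prod.fst_add, Prod.fst_sum, Prod.smul_mk, smul_zero]
    simpa using h1 u1
  · simp only [Prod.snd_add, Prod.snd_sum, Prod.smul_mk, smul_zero]
    simpa using h1 u2

lemma fderiv_prod_dir {m : ℕ} (φ : (Fin m → ℝ) × (Fin m → ℝ) → ℝ) (hφ : ContDiff ℝ 1 φ)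
    (X V u1 u2 : Fin m → ℝ) :
    fderiv ℝ φ (X, V) (u1, u2)
      = (∑ k, u1 k * pder (fun y => φ (y, V)) X k)
        + ∑ k, u2 k * pder (fun w => φ (X, w)) V k := by
  have hd := ((hφ.differentiable one_ne_zero) (X, V)).hasFDerivAt
  have hL : HasFDerivAt (fun y => φ (y, V))
      ((fderiv ℝ φ (X, V)).comp (ContinuousLinearMap.inl ℝ _ _)) X :=
    hd.comp X (hasFDerivAt_prodMk_left X V)
  have hR : HasFDerivAt (fun w => φ (X, w))
      ((fderiv ℝ φ (X, V)).comp (ContinuousLinearMap.inr ℝ _ _)) V :=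
    hd.comp V (hasFDerivAt_prodMk_right X V)
  have e1 : ∀ k, pder (fun y => φ (y, V)) X k
      = fderiv ℝ φ (X, V) (Pi.single k 1, 0) := by
    intro k; rw [pder, hL.fderiv]; rfl
  have e2 : ∀ k, pder (fun w => φ (X, w)) V k
      = fderiv ℝ φ (X, V) (0, Pi.single k 1) := by
    intro k; rw [pder, hR.fderiv]; rfl
  conv_lhs => rw [pair_decomp u1 u2]
  rw [map_add, map_sum, map_sum]
  congr 1
  · exact Finset.sum_congr rfl fun k _ => by rw [ContinuousLinearMap.map_smul, e1]; rfl
  · exact Finset.sum_congr rfl fun k _ => by rw [ContinuousLinearMap.map_smul, e2]; rfl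

lemma key_alg {m : ℕ} (V A : Fin m → ℝ) (g : Fin m → Fin m → ℝ) (P Q : Fin m → Fin m → Fin m → ℝ)
    (hg : ∀ i j, g i j = g j i) :
    1/2 * ∑ i, (A i * (∑ j, g i j * V j)
      + V i * ∑ j, (((∑ k, V k * P i j k) + ∑ k, A k * Q i j k) * V j + g i j * A j))
    = ∑ i, V i * ((∑ j, (g i j + 1/2 * ∑ l, V l * Q i l j) * A j)
      + ((∑ j, (∑ k, V k * P i j k) * V j) - 1/2 * ∑ j, ∑ k, (V j * V k) * P j k i)) := by
  have e1 : ∑ i, ∑ j, 1/2 * (A i * (g i j * V j))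
      = 1/2 * ∑ i, ∑ j, V i * (g i j * A j) := by
    rw [Finset.sum_comm, Finset.mul_sum]
    refine Finset.sum_congr rfl fun j _ => ?_
    rw [Finset.mul_sum]
    refine Finset.sum_congr rfl fun i _ => ?_
    rw [hg j i]; ring
  have e2 : ∑ i, ∑ j, ∑ k, 1/2 * (V i * (V k * P i j k * V j))
      = 1/2 * ∑ i, ∑ j, ∑ k, V i * (V k * P i j k * V j) := by
    rw [Finset.mul_sum]
    refine Finset.sum_congr rfl fun i _ => ?_
    rw [Finset.mul_sum]
    refine Finset.sum_congr rfl fun j _ => ?_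
    rw [Finset.mul_sum]
  have e3 : ∑ i, ∑ j, ∑ k, 1/2 * (V i * (A k * Q i j k * V j))
      = ∑ i, ∑ j, ∑ k, V i * (1/2 * (V k * Q i k j) * A j) := by
    refine Finset.sum_congr rfl fun i _ => ?_
    rw [Finset.sum_comm]
    refine Finset.sum_congr rfl fun j _ => Finset.sum_congr rfl fun k _ => by ring
  have e4 : ∑ i, ∑ j, 1/2 * (V i * (g i j * A j))
      = 1/2 * ∑ i, ∑ j, V i * (g i j * A j) := by
    rw [Finset.mul_sum]
    refine Finset.sum_congr rfl fun i _ => ?_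
    rw [Finset.mul_sum]
  have e5 : ∑ i, ∑ j, ∑ k, V i * (1/2 * (V j * V k * P j k i))
      = 1/2 * ∑ i, ∑ j, ∑ k, V i * (V k * P i j k * V j) := by
    rw [cycle3 (fun i j k => V i * (1/2 * (V j * V k * P j k i)))]
    rw [Finset.mul_sum]
    refine Finset.sum_congr rfl fun i _ => ?_
    rw [Finset.mul_sum]
    refine Finset.sum_congr rfl fun j _ => ?_
    rw [Finset.mul_sum]
    exact Finset.sum_congr rfl fun k _ => by ring
  simp only [Finset.mul_sum, Finset.sum_mul, add_mul, mul_add, mul_sub, sub_eq_add_neg,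
    Finset.sum_add_distrib, Finset.sum_neg_distrib, neg_mul, mul_neg]
  rw [e1, e3, e4, e2, e5]
  ring

theorem stmt8 {m : ℕ}
    (G : (Fin m → ℝ) → (Fin m → ℝ) → Matrix (Fin m) (Fin m) ℝ)
    (hG : ∀ i j, ContDiff ℝ 1 (fun p : (Fin m → ℝ) × (Fin m → ℝ) => G p.1 p.2 i j))
    (hGsym : ∀ x v, (G x v).IsSymm)
    (x : ℝ → Fin m → ℝ) (hx : ContDiff ℝ 2 x)
    -- force-free GDS equation of motion along the trajectory:
    (heq : ∀ t,
      (G (x t) (deriv x t) + XiG G (x t) (deriv x t)).mulVec (deriv (deriv x) t)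
        + xiG G (x t) (deriv x t) = 0) :
    ∀ t, HasDerivAt
      (fun s => (1 / 2) * (deriv x s ⬝ᵥ (G (x s) (deriv x s)).mulVec (deriv x s)))
      0 t := by
  intro t
  have hx2 : Differentiable ℝ x ∧ ContDiff ℝ 1 (deriv x) := by
    rw [show (2 : WithTop ℕ∞) = 1 + 1 from by norm_num, contDiff_succ_iff_deriv] at hx
    exact ⟨hx.1, hx.2.2⟩
  obtain ⟨hxd, hdx⟩ := hx2
  have hdxd : Differentiable ℝ (deriv x) := hdx.differentiable one_ne_zero
  set X := x t with hXdef
  set V := deriv x t with hVdef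
  set A := deriv (deriv x) t with hAdef
  have hc : HasDerivAt (fun s => ((x s, deriv x s) : (Fin m → ℝ) × (Fin m → ℝ))) (V, A) t :=
    ((hxd t).hasDerivAt).prodMk ((hdxd t).hasDerivAt)
  have hvd : ∀ i, HasDerivAt (fun s => deriv x s i) (A i) t :=
    fun i => (hasDerivAt_pi.mp (hdxd t).hasDerivAt) i
  -- derivative of each matrix entry along the curve
  have hgd : ∀ i j, HasDerivAt (fun s => G (x s) (deriv x s) i j)
      ((∑ k, V k * pder (fun y => G y V i j) X k)
        + ∑ k, A k * pder (fun w => G X w i j) V k) t := by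
    intro i j
    have h1 : HasDerivAt (fun s => G (x s) (deriv x s) i j)
        (fderiv ℝ (fun p : (Fin m → ℝ) × (Fin m → ℝ) => G p.1 p.2 i j) (X, V) (V, A)) t :=
      HasFDerivAt.comp_hasDerivAt (l := fun p : (Fin m → ℝ) × (Fin m → ℝ) => G p.1 p.2 i j) t
        (((hG i j).differentiable one_ne_zero) (X, V)).hasFDerivAt hc
    rw [fderiv_prod_dir _ (hG i j)] at h1
    exact h1
  -- the derivative value
  set D : ℝ := 1/2 * ∑ i, (A i * (∑ j, G X V i j * V j)
      + V i * ∑ j, (((∑ k, V k * pder (fun y => G y V i j) X k)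
        + ∑ k, A k * pder (fun w => G X w i j) V k) * V j + G X V i j * A j)) with hDdef
  have hK : HasDerivAt
      (fun s => (1 / 2) * (deriv x s ⬝ᵥ (G (x s) (deriv x s)).mulVec (deriv x s))) D t := by
    have hfeq : (fun s => (1 / 2) * (deriv x s ⬝ᵥ (G (x s) (deriv x s)).mulVec (deriv x s)))
        = fun s => (1/2 : ℝ) * ∑ i, deriv x s i * ∑ j, G (x s) (deriv x s) i j * deriv x s j := by
      funext s; simp [dotProduct, mulVec]
    rw [hfeq, hDdef]
    exact HasDerivAt.const_mul _ (HasDerivAt.fun_sum fun i _ =>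
      (hvd i).fun_mul (HasDerivAt.fun_sum fun j _ => (hgd i j).fun_mul (hvd j)))
  -- expansion of the pder of the quadratic form
  have hfrozen : ∀ i j, Differentiable ℝ (fun y => G y V i j) :=
    fun i j => ((hG i j).differentiable one_ne_zero).comp (differentiable_id.prodMk (differentiable_const V))
  have hPF : ∀ i, pder (fun y => V ⬝ᵥ (G y V).mulVec V) X i
      = ∑ j, ∑ k, (V j * V k) * pder (fun y => G y V j k) X i := by
    intro i
    have hfun : (fun y => V ⬝ᵥ (G y V).mulVec V)
        = fun y => ∑ j, ∑ k, V j * (G y V j k * V k) := by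
      funext y; simp [dotProduct, mulVec, Finset.mul_sum]
    have hsum : HasFDerivAt (fun y => ∑ j, ∑ k, V j * (G y V j k * V k))
        (∑ j, ∑ k, (V j * V k) • fderiv ℝ (fun y => G y V j k) X) X := by
      apply HasFDerivAt.fun_sum; intro j _; apply HasFDerivAt.fun_sum; intro k _
      have h := ((hfrozen j k) X).hasFDerivAt
      have h2 := (h.mul_const (V k)).const_mul (V j)
      exact h2.congr_fderiv (smul_smul _ _ _)
    rw [pder, hfun, hsum.fderiv]
    simp [ContinuousLinearMap.sum_apply, pder]
  -- key algebraic identity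
  have hsym : ∀ i j, G X V i j = G X V j i := fun i j => (hGsym X V).apply j i
  have key : D = V ⬝ᵥ ((G X V + XiG G X V).mulVec A + xiG G X V) := by
    have h3 : xiG G X V = fun i => (∑ j, (∑ k, V k * pder (fun y => G y V i j) X k) * V j)
        - 1/2 * ∑ j, ∑ k, (V j * V k) * pder (fun y => G y V j k) X i := by
      funext i
      simp only [xiG]
      rw [hPF i]
    have h2 : V ⬝ᵥ ((G X V + XiG G X V).mulVec A + xiG G X V)
        = ∑ i, V i * ((∑ j, (G X V i j + 1/2 * ∑ l, V l * pder (fun w => G X w i l) V j) * A j)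
          + ((∑ j, (∑ k, V k * pder (fun y => G y V i j) X k) * V j)
            - 1/2 * ∑ j, ∑ k, (V j * V k) * pder (fun y => G y V j k) X i)) := by
      rw [h3]
      simp only [dotProduct, mulVec, Matrix.add_apply, XiG, Matrix.of_apply, Pi.add_apply]
    rw [hDdef, h2]
    exact key_alg V A (fun i j => G X V i j) (fun i j k => pder (fun y => G y V i j) X k)
      (fun i j k => pder (fun w => G X w i j) V k) hsym
  rw [heq t, dotProduct_zero] at key
  rw [← key]
  exact hK
end

section
/- Let D : ℝᵐ × ℝⁿ → ℝ^(n×n) be diagonal-valued with entries dᵢ(x, ẏᵢ) satisfying dᵢ ≥ 0 and ẏᵢ ∂_{ẏᵢ} dᵢ(x, ẏᵢ) ≥ 0, let L : ℝᵐ → ℝ^(n×m) be differentiable, let R : ℝᵐ → ℝ^(m×m) be PSD-valued, and set G(x,ẋ) = R(x) + L(x)ᵀ D(x, L(x)ẋ) L(x). Then the curvature correction Ξ_G(x,ẋ) = ½ Σᵢ ẋᵢ ∂_ẋ gᵢ(x,ẋ), where gᵢ is the i-th column of G, is symmetric positive semidefinite, and consequently the inertia M(x,ẋ) = G(x,ẋ)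 + Ξ_G(x,ẋ) satisfies vᵀM v ≥ vᵀGv for all v. -/
open Matrix BigOperators

theorem stmt11 {m n : ℕ}
    (dfun : Fin n → (Fin m → ℝ) → ℝ → ℝ)
    (hd_diff : ∀ i x, Differentiable ℝ (dfun i x))
    (hd_nonneg : ∀ i x s, 0 ≤ dfun i x s)
    (hd_mono : ∀ i x s, 0 ≤ s * deriv (dfun i x) s)
    (L : (Fin m → ℝ) → Matrix (Fin n) (Fin m) ℝ)
    (hL : ∀ i j, Differentiable ℝ fun x => L x i j)
    (R : (Fin m → ℝ) → Matrix (Fin m) (Fin m) ℝ)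
    (hR : ∀ x, (R x).PosSemidef)
    (x v : Fin m → ℝ) :
    let G : (Fin m → ℝ) → (Fin m → ℝ) → Matrix (Fin m) (Fin m) ℝ := fun y w =>
      R y + (L y)ᵀ * Matrix.diagonal (fun i => dfun i y ((L y).mulVec w i)) * L y
    (XiG G x v).PosSemidef ∧
    (∀ u : Fin m → ℝ, u ⬝ᵥ (G x v).mulVec u ≤ u ⬝ᵥ ((G x v + XiG G x v).mulVec u)) := by
  intro G
  set A := L x with hA
  set D : Fin n → ℝ := fun a => deriv (dfun a x) (A.mulVec v a) with hD
  -- linear map w ↦ (A *ᵥ w) a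
  let Φ : Fin n → ((Fin m → ℝ) →L[ℝ] ℝ) := fun a =>
    LinearMap.toContinuousLinearMap ((LinearMap.proj a).comp (Matrix.mulVecLin A))
  have hΦ_apply : ∀ a (w : Fin m → ℝ), Φ a w = A.mulVec w a := fun a w => rfl
  have hφ : ∀ a : Fin n, HasFDerivAt (fun w => A.mulVec w a) (Φ a) v := fun a =>
    (Φ a).hasFDerivAt
  have hcomp : ∀ a : Fin n,
      HasFDerivAt (fun w => dfun a x (A.mulVec w a)) (D a • Φ a) v := fun a =>
    ((hd_diff a x (A.mulVec v a)).hasDerivAt).comp_hasFDerivAt v (hφ a)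
  have entry : ∀ (d : Fin n → ℝ) (j k : Fin m),
      (Aᵀ * Matrix.diagonal d * A) j k = ∑ a, A a j * d a * A a k := by
    intro d j k
    rw [Matrix.mul_apply]
    simp only [Matrix.mul_diagonal, Matrix.transpose_apply]
  have hGent : ∀ j i : Fin m, (fun w => G x w j i)
      = fun w => R x j i + ∑ a, A a j * dfun a x (A.mulVec w a) * A a i := by
    intro j i; funext w
    show (R x + Aᵀ * Matrix.diagonal (fun a => dfun a x (A.mulVec w a)) * A) j i = _
    rw [Matrix.add_apply, entry]
  have hGd : ∀ j i : Fin m, HasFDerivAt (fun w => G x w j i)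
      (∑ a, (A a j * A a i * D a) • Φ a) v := by
    intro j i
    rw [hGent j i]
    refine HasFDerivAt.const_add (R x j i) ?_
    refine HasFDerivAt.fun_sum fun a _ => ?_
    have h1 := ((hcomp a).const_mul (A a j)).mul_const (A a i)
    have h2 : (A a j * A a i * D a) • Φ a = A a i • A a j • D a • Φ a := by
      rw [smul_smul, smul_smul]; ring_nf
    rw [h2]; exact h1
  have hΦ_single : ∀ a (k : Fin m), Φ a (Pi.single k 1) = A a k := by
    intro a k
    rw [hΦ_apply]
    simp [Matrix.mulVec, dotProduct, Pi.single_apply, mul_ite]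
  have key : ∀ j i k : Fin m,
      pder (fun w => G x w j i) v k = ∑ a, A a j * A a i * D a * A a k := by
    intro j i k
    rw [pder, (hGd j i).fderiv]
    rw [ContinuousLinearMap.sum_apply]
    refine Finset.sum_congr rfl fun a _ => ?_
    rw [ContinuousLinearMap.smul_apply, hΦ_single a k, smul_eq_mul]
  set c : Fin n → ℝ := fun a => (1 / 2) * (A.mulVec v a * D a) with hc
  have hXi : XiG G x v = Aᵀ * Matrix.diagonal c * A := by
    ext j k
    rw [entry]
    simp only [XiG, Matrix.of_apply, key]
    have lhs_eq : (1 / 2 : ℝ) * ∑ i, v i * ∑ a, A a j * A a i * D a * A a k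
        = ∑ a, ∑ b, (1 / 2) * (v b * (A a j * A a b * D a * A a k)) := by
      simp only [Finset.mul_sum]
      rw [Finset.sum_comm]
    rw [lhs_eq]
    refine Finset.sum_congr rfl fun a _ => ?_
    simp only [hc, Matrix.mulVec, dotProduct]
    rw [Finset.sum_mul, Finset.mul_sum, Finset.mul_sum, Finset.sum_mul]
    exact Finset.sum_congr rfl fun b _ => by ring
  have hc_nonneg : ∀ a, 0 ≤ c a := fun a =>
    mul_nonneg (by norm_num) (hd_mono a x (A.mulVec v a))
  have hdiag : (Matrix.diagonal c).PosSemidef :=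
    Matrix.posSemidef_diagonal_iff.mpr hc_nonneg
  have hPSD : (XiG G x v).PosSemidef := by
    rw [hXi, ← Matrix.conjTranspose_eq_transpose_of_trivial]
    exact hdiag.conjTranspose_mul_mul_same A
  refine ⟨hPSD, fun u => ?_⟩
  conv_rhs => rw [Matrix.add_mulVec, dotProduct_add]
  have h0 : (0 : ℝ) ≤ u ⬝ᵥ (XiG G x v).mulVec u := by simpa using hPSD.dotProduct_mulVec_nonneg u
  linarith
end
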